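/- For the step set {NE, SE, NW} = {(1,1),(1,-1),(-1,1)}, the two kernel roots Y_{±1}(x) = (x/(2t(1+x²)))·(1 ∓ √(1 - 4t²(1+x²))), viewed as algebraic functions/formal series, satisfy Y_{+1}(Y_{-1}(x)) = x and Y_{-1}(Y_{+1}(x)) = x. -/

import Mathlib

open PowerSeries

/-- The field `K = ℚ((t))` of formal Laurent series in `t`. -/
abbrev K := LaurentSeries ℚ

/-- The element `t` of `ℚ((t))`. -/
noncomputable def tt : K := HahnSeries.single 1 1

/-- Composition of formal power series (in the variable `x`, with coefficients
in a commutative ring): `(f ∘ g)`, the substitution of `g` into `f`.  When `g`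
has zero constant term, the coefficient of `xⁿ` in `f(g(x))` is the finite sum
`∑_{k ≤ n} f_k · [xⁿ](g^k)`. -/
noncomputable def pscomp {R : Type*} [CommRing R] (f g : PowerSeries R) : PowerSeries R :=
  PowerSeries.mk fun n =>
    ∑ k ∈ Finset.range (n + 1), PowerSeries.coeff k f * PowerSeries.coeff n (g ^ k)




namespace Aux
variable {R : Type*} [CommRing R]

theorem coeff_pow_eq_zero {g : PowerSeries R} (hg : constantCoeff g = 0)
    {k n : ℕ} (h : n < k) : coeff n (g ^ k) = 0 := by
  have h1 : (X : R⟦X⟧) ∣ g := X_dvd_iff.mpr hg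
  have h2 : (X : R⟦X⟧) ^ k ∣ g ^ k := pow_dvd_pow_of_dvd h1 k
  exact X_pow_dvd_iff.mp h2 n h

theorem coeff_pscomp (f g : PowerSeries R) (n : ℕ) :
    coeff n (pscomp f g)
      = ∑ k ∈ Finset.range (n + 1), coeff k f * coeff n (g ^ k) := by
  simp [pscomp]

theorem coeff_eval₂ {g : PowerSeries R} (hg : constantCoeff g = 0)
    (P : Polynomial R) (n : ℕ) :
    coeff n (P.eval₂ (C) g)
      = ∑ k ∈ Finset.range (n + 1), P.coeff k * coeff n (g ^ k) := by
  set N := max (P.natDegree + 1) (n + 1) with hN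
  have hdeg : P.natDegree < N := lt_of_lt_of_le (Nat.lt_succ_self _) (le_max_left _ _)
  rw [Polynomial.eval₂_eq_sum_range' _ hdeg, map_sum]
  have hsub : Finset.range (n + 1) ⊆ Finset.range N :=
    Finset.range_subset_range.mpr (le_max_right _ _)
  rw [← Finset.sum_subset hsub]
  · exact Finset.sum_congr rfl fun k _ => by rw [coeff_C_mul]
  · intro k hk hk'
    have : n < k := by
      simp only [Finset.mem_range, not_lt] at hk'
      omega
    rw [coeff_C_mul, coeff_pow_eq_zero hg this, mul_zero]

theorem coeff_pscomp_eq_eval₂ {g : PowerSeries R} (hg : constantCoeff g = 0)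
    (f : PowerSeries R) {n m : ℕ} (h : n < m) :
    coeff n (pscomp f g) = coeff n ((trunc m f).eval₂ (C) g) := by
  rw [coeff_pscomp, coeff_eval₂ hg]
  refine Finset.sum_congr rfl fun k hk => ?_
  rw [coeff_trunc]
  simp only [Finset.mem_range] at hk
  rw [if_pos (by omega)]

theorem pscomp_add (f₁ f₂ g : PowerSeries R) :
    pscomp (f₁ + f₂) g = pscomp f₁ g + pscomp f₂ g := by
  ext n
  simp [coeff_pscomp, add_mul, Finset.sum_add_distrib]

theorem pscomp_neg (f g : PowerSeries R) : pscomp (-f) g = -pscomp f g := by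
  ext n
  simp [coeff_pscomp, Finset.sum_neg_distrib]

theorem pscomp_sub (f₁ f₂ g : PowerSeries R) :
    pscomp (f₁ - f₂) g = pscomp f₁ g - pscomp f₂ g := by
  rw [sub_eq_add_neg, pscomp_add, pscomp_neg, sub_eq_add_neg]

theorem pscomp_C (r : R) (g : PowerSeries R) : pscomp (C r) g = C r := by
  ext n
  simp only [coeff_pscomp, coeff_C, ite_mul, zero_mul]
  rw [Finset.sum_ite_eq' (Finset.range (n+1)) 0]
  simp [coeff_one]

theorem pscomp_one (g : PowerSeries R) : pscomp 1 g = 1 := by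
  have := pscomp_C (1 : R) g; simpa using this

theorem pscomp_zero (g : PowerSeries R) : pscomp 0 g = 0 := by
  have := pscomp_C (0 : R) g; simpa using this

theorem pscomp_X {g : PowerSeries R} (hg : constantCoeff g = 0) :
    pscomp X g = g := by
  ext n
  simp only [coeff_pscomp, coeff_X, ite_mul, one_mul, zero_mul]
  rw [Finset.sum_ite_eq' (Finset.range (n+1)) 1]
  cases n with
  | zero => simpa using hg.symm
  | succ n => simp

theorem coeff_trunc_mul_trunc {f₁ f₂ : PowerSeries R} {k m : ℕ} (h : k < m) :
    (trunc m f₁ * trunc m f₂).coeff k = coeff k (f₁ * f₂) := by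
  rw [Polynomial.coeff_mul, coeff_mul]
  refine Finset.sum_congr rfl fun p hp => ?_
  replace hp : p.1 + p.2 = k := by simpa using hp
  rw [coeff_trunc, coeff_trunc, if_pos (by omega), if_pos (by omega)]

theorem pscomp_mul {g : PowerSeries R} (hg : constantCoeff g = 0)
    (f₁ f₂ : PowerSeries R) :
    pscomp (f₁ * f₂) g = pscomp f₁ g * pscomp f₂ g := by
  ext n
  have hm : n < n + 1 := Nat.lt_succ_self n
  rw [coeff_pscomp_eq_eval₂ hg _ hm]
  have hR : coeff n (pscomp f₁ g * pscomp f₂ g)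
      = coeff n ((trunc (n+1) f₁).eval₂ (C) g * (trunc (n+1) f₂).eval₂ (C) g) := by
    rw [coeff_mul, coeff_mul]
    refine Finset.sum_congr rfl fun p hp => ?_
    replace hp : p.1 + p.2 = n := by simpa using hp
    rw [coeff_pscomp_eq_eval₂ hg _ (show p.1 < n+1 by omega),
      coeff_pscomp_eq_eval₂ hg _ (show p.2 < n+1 by omega)]
  rw [hR, ← Polynomial.eval₂_mul, coeff_eval₂ hg, coeff_eval₂ hg]
  refine Finset.sum_congr rfl fun k hk => ?_
  rw [Finset.mem_range] at hk
  rw [coeff_trunc, if_pos (by omega), coeff_trunc_mul_trunc (by omega)]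

theorem pscomp_pow {g : PowerSeries R} (hg : constantCoeff g = 0)
    (f : PowerSeries R) (k : ℕ) : pscomp (f ^ k) g = pscomp f g ^ k := by
  induction k with
  | zero => simpa using pscomp_one g
  | succ k ih => rw [pow_succ, pow_succ, pscomp_mul hg, ih]

theorem coeff_zero_pscomp (f g : PowerSeries R) :
    coeff 0 (pscomp f g) = coeff 0 f := by
  simp [coeff_pscomp]

theorem coeff_one_mul' (f g : PowerSeries R) :
    coeff 1 (f * g) = coeff 0 f * coeff 1 g + coeff 1 f * coeff 0 g := by
  rw [coeff_mul, Finset.Nat.sum_antidiagonal_eq_sum_range_succ_mk]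
  simp [Finset.sum_range_succ]

theorem coeff_one_pscomp (f g : PowerSeries R) :
    coeff 1 (pscomp f g) = coeff 1 f * coeff 1 g := by
  simp [coeff_pscomp, Finset.sum_range_succ, coeff_one]

end Aux
theorem tt_ne : tt ≠ 0 := HahnSeries.single_ne_zero one_ne_zero

theorem tt_sq_ne : (4:K)*tt^2 ≠ 1 := by
  intro h
  have h2 : tt^2 = HahnSeries.single 2 1 := by
    rw [tt, pow_two, HahnSeries.single_mul_single]; norm_num
  have := congrArg (fun f => HahnSeries.coeff f 0) h
  rw [h2, show (4:K) = HahnSeries.C (4:ℚ) from by rw [map_ofNat],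
    HahnSeries.C_mul_eq_smul] at this
  simp [HahnSeries.coeff_single] at this

theorem four_ne : (4:K) ≠ 0 := by
  rw [show (4:K) = HahnSeries.C (4:ℚ) from by rw [map_ofNat]]
  exact HahnSeries.C_ne_zero (by norm_num)

theorem no_case2 (a b ε : K) (h1 : 2*tt*a = 1 - ε) (h2 : 2*tt*b = 1 + ε)
    (h3 : ε^2 = 1 - 4*tt^2) (h4 : tt*(a*b+1) = a) : False := by
  have hT : tt^2 ≠ 0 := pow_ne_zero _ tt_ne
  have h5 : (2*tt*a)*(2*tt*b) = (1-ε)*(1+ε) := by rw [h1, h2]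
  have h6 : (4*tt^2)*(a*b-1) = 0 := by linear_combination h5 - h3
  have hab : a*b = 1 := by
    rcases mul_eq_zero.mp h6 with h | h
    · exact absurd ((mul_eq_zero.mp h).resolve_left four_ne) hT
    · exact sub_eq_zero.mp h
  have ha2 : a = 2*tt := by linear_combination (-1 : K)*h4 + tt*hab
  have hε : ε = 1 - 4*tt^2 := by linear_combination h1 - 2*tt*ha2
  have hfin : (4*tt^2) * (4*tt^2 - 1) = 0 := by
    linear_combination h3 - (ε + 1 - 4*tt^2)*hε
  rcases mul_eq_zero.mp hfin with h | h
  · exact absurd ((mul_eq_zero.mp h).resolve_left four_ne) hT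
  · exact tt_sq_ne (sub_eq_zero.mp h)

theorem two_ne : (2:K) ≠ 0 := by
  rw [show (2:K) = HahnSeries.C (2:ℚ) from by rw [map_ofNat]]
  exact HahnSeries.C_ne_zero (by norm_num)

set_option maxHeartbeats 1000000 in
open Aux in
theorem comp_eq_X (s Y Z : PowerSeries K)
    (hs : s^2 = 1 - 4 * (PowerSeries.C tt)^2 * (1 + X^2))
    (hY : 2 * PowerSeries.C tt * (1+X^2) * Y = X * (1-s))
    (hZ : 2 * PowerSeries.C tt * (1+X^2) * Z = X * (1+s)) :
    pscomp Z Y = X := by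
  have hA : (PowerSeries.C tt) ≠ 0 := fun h =>
    tt_ne (by simpa using congrArg (constantCoeff) h)
  have hU : (1 + X^2 : PowerSeries K) ≠ 0 := fun h =>
    one_ne_zero (α := K) (by simpa using congrArg (constantCoeff) h)
  -- constant coefficients vanish
  have hY0 : constantCoeff Y = 0 := by
    have h := congrArg (constantCoeff) hY
    simp [map_ofNat, two_ne, tt_ne] at h
    exact h
  have hZ0 : constantCoeff Z = 0 := by
    have h := congrArg (constantCoeff) hZ
    simp [map_ofNat, two_ne, tt_ne] at h
    exact h
  -- the quadratic equations
  have hcanc : (4 * PowerSeries.C tt * (1+X^2) : PowerSeries K) ≠ 0 := by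
    refine mul_ne_zero (mul_ne_zero ?_ hA) hU
    intro h; exact four_ne (by simpa [map_ofNat] using congrArg (constantCoeff) h)
  have hQY : PowerSeries.C tt*(1+X^2)*Y^2 - X*Y + PowerSeries.C tt*X^2 = 0 := by
    have h4 : (4 * PowerSeries.C tt * (1+X^2)) *
        (PowerSeries.C tt*(1+X^2)*Y^2 - X*Y + PowerSeries.C tt*X^2) = 0 := by
      linear_combination (2*PowerSeries.C tt*(1+X^2)*Y + X*(1-s) - 2*X) * hY + X^2 * hs
    exact (mul_eq_zero.mp h4).resolve_left hcanc
  have hQZ : PowerSeries.C tt*(1+X^2)*Z^2 - X*Z + PowerSeries.C tt*X^2 = 0 := by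
    have h4 : (4 * PowerSeries.C tt * (1+X^2)) *
        (PowerSeries.C tt*(1+X^2)*Z^2 - X*Z + PowerSeries.C tt*X^2) = 0 := by
      linear_combination (2*PowerSeries.C tt*(1+X^2)*Z + X*(1+s) - 2*X) * hZ + X^2 * hs
    exact (mul_eq_zero.mp h4).resolve_left hcanc
  -- substitute x ↦ Y into the equation for Z
  set W := pscomp Z Y with hW
  have hc := congrArg (fun f => pscomp f Y) hQZ
  simp only [pscomp_sub, pscomp_add, pscomp_mul hY0, pscomp_pow hY0, pscomp_C,
    pscomp_X hY0, pscomp_one, pscomp_zero, ← hW] at hc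
  -- symmetric equation
  have hsym : PowerSeries.C tt*(1 + Y^2)*X^2 - Y*X + PowerSeries.C tt*Y^2 = 0 := by
    linear_combination hQY
  have hfac : (W - X) * (PowerSeries.C tt*(1+Y^2)*(W+X) - Y) = 0 := by
    linear_combination hc - hsym
  rcases mul_eq_zero.mp hfac with h | hF
  · exact sub_eq_zero.mp h
  · -- rule out the second factor via the coefficient of x
    exfalso
    set a := coeff 1 Y with ha
    set b := coeff 1 Z with hb
    set s0 := coeff 0 s with hs0
    have h1 : 2*tt*a = 1 - s0 := by
      have h := congrArg (coeff 1) hY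
      simp [coeff_one_mul', hY0, coeff_one] at h
      rw [map_ofNat] at h
      simpa [ha, hs0, coeff_zero_eq_constantCoeff] using h
    have h2 : 2*tt*b = 1 + s0 := by
      have h := congrArg (coeff 1) hZ
      simp [coeff_one_mul', hZ0, coeff_one] at h
      rw [map_ofNat] at h
      simpa [hb, hs0, coeff_zero_eq_constantCoeff] using h
    have h3 : s0^2 = 1 - 4*tt^2 := by
      have h := congrArg (constantCoeff) hs
      simp at h
      rw [map_ofNat] at h
      simpa [hs0, coeff_zero_eq_constantCoeff] using h
    have h4 : tt*(a*b+1) = a := by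
      have h := congrArg (coeff 1) hF
      simp [coeff_one_mul', coeff_one_pscomp, coeff_zero_pscomp, hY0, hZ0, coeff_one] at h
      have hw0 : constantCoeff W = 0 := by
        rw [hW, ← coeff_zero_eq_constantCoeff_apply, coeff_zero_pscomp,
          coeff_zero_eq_constantCoeff_apply]
        exact hZ0
      have hw1 : coeff 1 W = b * a := by rw [hW, coeff_one_pscomp, ← hb, ← ha]
      rw [hw0, hw1] at h
      linear_combination h
    exact no_case2 a b s0 h1 h2 h3 h4

/-- For the step set `{NE, SE, NW} = {(1,1),(1,-1),(-1,1)}` the two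
kernel roots `Y₊₁(x) = (x/(2t(1+x²)))(1 - √(1-4t²(1+x²)))` and
`Y₋₁(x) = (x/(2t(1+x²)))(1 + √(1-4t²(1+x²)))`, viewed as formal series in `x`
with coefficients in `ℚ((t))`, satisfy `Y₊₁(Y₋₁(x)) = x` and `Y₋₁(Y₊₁(x)) = x`,
composition being formal series substitution.  (Here `s` is a square root of
`1 - 4t²(1+x²)` in `ℚ((t))⟦x⟧`, and `Y₊₁, Y₋₁` are characterized by
`2t(1+x²)·Y₊₁ = x(1-s)` and `2t(1+x²)·Y₋₁ = x(1+s)`.) -/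
theorem kernel_roots_inverse
    (s Yp Ym : PowerSeries K)
    (hs : s ^ 2 = 1 - 4 * PowerSeries.C (tt ^ 2) * (1 + PowerSeries.X ^ 2))
    (hYp : 2 * PowerSeries.C tt * (1 + PowerSeries.X ^ 2) * Yp
        = PowerSeries.X * (1 - s))
    (hYm : 2 * PowerSeries.C tt * (1 + PowerSeries.X ^ 2) * Ym
        = PowerSeries.X * (1 + s)) :
    pscomp Yp Ym = PowerSeries.X ∧ pscomp Ym Yp = PowerSeries.X := by
  have hs' : s^2 = 1 - 4*(PowerSeries.C tt)^2*(1+PowerSeries.X^2) := by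
    rw [← map_pow]; exact hs
  constructor
  · refine comp_eq_X (-s) Ym Yp ?_ ?_ ?_
    · linear_combination hs'
    · rw [hYm]; ring
    · rw [hYp]; ring
  · exact comp_eq_X s Yp Ym hs' hYp hYm
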